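/- (Monotone fictitious play generates monotone iterates.) Let (P, ≤) be a partially ordered set with binary averaging operations making it convex in an ordered vector space sense, let Γ : A → P be antitone and R : P → A be antitone, where (A, ≤) is a partially ordered convex subset of a vector space closed under convex combinations that respect the order (if a ≤ b and a' ≤ b' then θa+(1−θ)a' ≤ θb+(1−θ)b'). Define ξ^{k+1} := R(Γ(ξ̄^k)) and ξ̄^{k+1} := (k/(k+1))ξ̄^k + (1/(k+1))ξ^{k+1}, and suppose ξ^1 ≤ ξ̄^0. Then by induction ξ^{k+1} ≤ ξ^k and ξ̄^{k+1} ≤ ξ̄^k for all k ≥ 1, provided Γ of a convex combination equals the convex combination of Γ values (Γ affine). -/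

import Mathlib

open Set

/-- Monotone fictitious play generates monotone iterates: with `Γ` affine and antitone,
`R` antitone, order-compatible convex combinations, iterates
`ξ^{k+1} = R(Γ(ξ̄^k))`, `ξ̄^{k+1} = (k/(k+1)) ξ̄^k + (1/(k+1)) ξ^{k+1}`, and `ξ¹ ≤ ξ̄⁰`,
one has `ξ^{k+1} ≤ ξ^k` and `ξ̄^{k+1} ≤ ξ̄^k` for all `k ≥ 1`. -/
theorem stmt_14
    {E F : Type*} [AddCommGroup E] [Module ℝ E] [PartialOrder E]
    [AddCommGroup F] [Module ℝ F] [PartialOrder F]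
    (hordE : ∀ θ : ℝ, θ ∈ Icc (0:ℝ) 1 → ∀ a b a' b' : E, a ≤ b → a' ≤ b' →
      θ • a + (1 - θ) • a' ≤ θ • b + (1 - θ) • b')
    (Γ : E → F)
    (hΓaff : ∀ θ : ℝ, θ ∈ Icc (0:ℝ) 1 → ∀ a b : E,
      Γ (θ • a + (1 - θ) • b) = θ • Γ a + (1 - θ) • Γ b)
    (hΓanti : ∀ a b : E, a ≤ b → Γ b ≤ Γ a)
    (R : F → E)
    (hRanti : ∀ p q : F, p ≤ q → R q ≤ R p)
    (ξ ξbar : ℕ → E)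
    (hstep : ∀ k : ℕ, ξ (k + 1) = R (Γ (ξbar k)))
    (havg : ∀ k : ℕ, ξbar (k + 1)
      = ((k : ℝ) / ((k : ℝ) + 1)) • ξbar k + ((1 : ℝ) / ((k : ℝ) + 1)) • ξ (k + 1))
    (hinit : ξ 1 ≤ ξbar 0) :
    ∀ k : ℕ, 1 ≤ k → ξ (k + 1) ≤ ξ k ∧ ξbar (k + 1) ≤ ξbar k := by

  have hmem : ∀ k : ℕ, ((k:ℝ)/((k:ℝ)+1)) ∈ Icc (0:ℝ) 1 := by
    intro k
    constructor
    · positivity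
    · rw [div_le_one (by positivity)]; linarith
  have hsub : ∀ k : ℕ, (1:ℝ) - (k:ℝ)/((k:ℝ)+1) = 1/((k:ℝ)+1) := by
    intro k
    have h : ((k:ℝ)+1) ≠ 0 := by positivity
    field_simp
    ring
  have hone : ∀ (k : ℕ) (c : E),
      ((k:ℝ)/((k:ℝ)+1)) • c + ((1:ℝ)/((k:ℝ)+1)) • c = c := by
    intro k c
    rw [← hsub k, ← add_smul]
    norm_num
  have hle : ∀ (k : ℕ) (a b c : E), a ≤ c → b ≤ c →
      ((k:ℝ)/((k:ℝ)+1)) • a + ((1:ℝ)/((k:ℝ)+1)) • b ≤ c := by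
    intro k a b c ha hb
    have h := hordE _ (hmem k) a c b c ha hb
    rw [hsub k] at h
    calc ((k:ℝ)/((k:ℝ)+1)) • a + ((1:ℝ)/((k:ℝ)+1)) • b
        ≤ ((k:ℝ)/((k:ℝ)+1)) • c + ((1:ℝ)/((k:ℝ)+1)) • c := h
      _ = c := hone k c
  have hge : ∀ (k : ℕ) (a b c : E), c ≤ a → c ≤ b →
      c ≤ ((k:ℝ)/((k:ℝ)+1)) • a + ((1:ℝ)/((k:ℝ)+1)) • b := by
    intro k a b c ha hb
    have h := hordE _ (hmem k) c a c b ha hb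
    rw [hsub k] at h
    calc c = ((k:ℝ)/((k:ℝ)+1)) • c + ((1:ℝ)/((k:ℝ)+1)) • c := (hone k c).symm
      _ ≤ _ := h
  have H : ∀ k : ℕ, ξ (k + 1) ≤ ξbar k := by
    intro k
    induction k with
    | zero => exact hinit
    | succ k ih =>
      have hbar : ξbar (k + 1) ≤ ξbar k := by
        rw [havg k]; exact hle k _ _ _ le_rfl ih
      have h1 : ξ (k + 1) ≤ ξbar (k + 1) := by
        rw [havg k]; exact hge k _ _ _ ih le_rfl
      have h2 : ξ (k + 2) ≤ ξ (k + 1) := by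
        rw [hstep (k + 1), hstep k]
        exact hRanti _ _ (hΓanti _ _ hbar)
      exact h2.trans h1
  intro k hk
  obtain ⟨m, rfl⟩ := Nat.exists_eq_add_of_le hk
  constructor
  · have hbar : ξbar (m + 1) ≤ ξbar m := by
      rw [havg m]; exact hle m _ _ _ le_rfl (H m)
    simp only [show (1 : ℕ) + m = m + 1 from by omega]
    rw [hstep (m + 1), hstep m]
    exact hRanti _ _ (hΓanti _ _ hbar)
  · simp only [show (1 : ℕ) + m = m + 1 from by omega]
    rw [havg (m + 1)]
    exact hle (m + 1) _ _ _ le_rfl (H (m + 1))
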